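/- Let σ = A|B and τ = C|D be two distinct compatible splits of a finite set X. Then the vectors v_σ = (|B|/n)𝟙_A − (|A|/n)𝟙_B and v_τ = (|D|/n)𝟙_C − (|C|/n)𝟙_D are linearly independent in ℝ^X. -/

import Mathlib

/-- The defining vector of the segment `S_σ` for the split `σ = A | Aᶜ`. -/
noncomputable def splitVec {X : Type*} [Fintype X] [DecidableEq X] (A : Finset X) (i : X) : ℝ :=
  if i ∈ A then (Aᶜ.card : ℝ) / (Fintype.card X) else -((A.card : ℝ) / (Fintype.card X))

lemma splitVec_compl {X : Type*} [Fintype X] [DecidableEq X] (A : Finset X) :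
    splitVec Aᶜ = -splitVec A := by
  funext i
  simp only [splitVec, Finset.mem_compl, compl_compl, Pi.neg_apply]
  by_cases h : i ∈ A <;> simp [h]

lemma pair_neg_right {u v : X → ℝ} (h : LinearIndependent ℝ ![u, -v]) :
    LinearIndependent ℝ ![u, v] := by
  rw [LinearIndependent.pair_iff] at h ⊢
  intro s t hst
  have := h s (-t) (by simpa [neg_smul, smul_neg] using hst)
  exact ⟨this.1, by linarith [neg_eq_zero.mp this.2]⟩

lemma pair_neg_left {u v : X → ℝ} (h : LinearIndependent ℝ ![-u, v]) :
    LinearIndependent ℝ ![u, v] := by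
  rw [LinearIndependent.pair_iff] at h ⊢
  intro s t hst
  have := h (-s) t (by simpa [neg_smul, smul_neg] using hst)
  exact ⟨by linarith [neg_eq_zero.mp this.1], this.2⟩

lemma splitVec_li_aux {X : Type*} [Fintype X] [DecidableEq X]
    (A C : Finset X) (hA : A.Nonempty) (hC : C.Nonempty)
    (hd : A ≠ Cᶜ) (h : A ∩ C = ∅) :
    LinearIndependent ℝ ![splitVec A, splitVec C] := by
  have : Nonempty X := ⟨hA.choose⟩
  have hn : (0 : ℝ) < Fintype.card X := by exact_mod_cast Fintype.card_pos
  have hsub : A ⊆ Cᶜ := by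
    intro x hx
    rw [Finset.mem_compl]
    intro hxC
    exact Finset.eq_empty_iff_forall_notMem.mp h x (Finset.mem_inter.mpr ⟨hx, hxC⟩)
  have hne : (Aᶜ ∩ Cᶜ).Nonempty := by
    rcases Finset.eq_empty_or_nonempty (Aᶜ ∩ Cᶜ) with he | hne
    · exfalso
      apply hd
      refine Finset.Subset.antisymm hsub ?_
      intro x hx
      by_contra hxA
      exact Finset.eq_empty_iff_forall_notMem.mp he x
        (Finset.mem_inter.mpr ⟨Finset.mem_compl.mpr hxA, hx⟩)
    · exact hne
  obtain ⟨x, hx⟩ := hne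
  obtain ⟨hxA, hxC⟩ := Finset.mem_inter.mp hx
  rw [Finset.mem_compl] at hxA hxC
  obtain ⟨y, hyA⟩ := hA
  have hyC : y ∉ C := Finset.mem_compl.mp (hsub hyA)
  rw [LinearIndependent.pair_iff]
  intro s t hst
  have h1 := congrFun hst x
  have h2 := congrFun hst y
  simp only [splitVec, Pi.add_apply, Pi.smul_apply, Pi.zero_apply, smul_eq_mul,
    if_pos, if_neg, hxA, hxC, hyA, hyC, if_true, if_false] at h1 h2
  have hcard : (A.card : ℝ) + (Aᶜ.card : ℝ) = Fintype.card X := by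
    exact_mod_cast A.card_add_card_compl
  have hApos : (0 : ℝ) < A.card := by exact_mod_cast Finset.card_pos.mpr ⟨y, hyA⟩
  have hCpos : (0 : ℝ) < C.card := by exact_mod_cast Finset.card_pos.mpr hC
  have hn' : (Fintype.card X : ℝ) ≠ 0 := ne_of_gt hn
  field_simp at h1 h2
  -- h1 : from x ∈ Aᶜ ∩ Cᶜ, h2 : from y ∈ A (and y ∉ C)
  have h1' : s * (A.card : ℝ) + t * C.card = 0 := by
    have hmul : (s * (A.card : ℝ) + t * C.card) * (Fintype.card X) = 0 := by
      linear_combination -h1 * (Fintype.card X : ℝ)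
    rcases mul_eq_zero.mp hmul with h' | h'
    · exact h'
    · exact absurd h' hn'
  have hs : s * ((A.card : ℝ) + Aᶜ.card) = 0 := by linear_combination h1' + h2
  rw [hcard] at hs
  have hs0 : s = 0 := by
    rcases mul_eq_zero.mp hs with h' | h'
    · exact h'
    · exact absurd h' hn'
  refine ⟨hs0, ?_⟩
  rw [hs0] at h1'
  have : t * (C.card : ℝ) = 0 := by linarith
  rcases mul_eq_zero.mp this with h' | h'
  · exact h'
  · exact absurd h' (ne_of_gt hCpos)

theorem splitVec_linearIndependent {X : Type*} [Fintype X] [DecidableEq X]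
    (A C : Finset X) (hA : A.Nonempty) (hAc : Aᶜ.Nonempty)
    (hC : C.Nonempty) (hCc : Cᶜ.Nonempty)
    (hdist : A ≠ C ∧ A ≠ Cᶜ)
    (hcompat : A ∩ C = ∅ ∨ A ∩ Cᶜ = ∅ ∨ Aᶜ ∩ C = ∅ ∨ Aᶜ ∩ Cᶜ = ∅) :
    LinearIndependent ℝ ![splitVec A, splitVec C] := by
  obtain ⟨hd1, hd2⟩ := hdist
  rcases hcompat with h | h | h | h
  · exact splitVec_li_aux A C hA hC hd2 h
  · have := splitVec_li_aux A Cᶜ hA hCc (by simpa using hd1) h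
    rw [splitVec_compl] at this
    exact pair_neg_right this
  · have := splitVec_li_aux Aᶜ C hAc hC (fun h' => hd1 (by simpa using congrArg (·ᶜ) h')) h
    rw [splitVec_compl] at this
    exact pair_neg_left this
  · have := splitVec_li_aux Aᶜ Cᶜ hAc hCc (fun h' => hd2 (by simpa using congrArg (·ᶜ) h')) h
    rw [splitVec_compl, splitVec_compl] at this
    exact pair_neg_left (pair_neg_right this)
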